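/- Let n ≥ 1, d ≥ 1, and let ψ : (Fin n → Fin d) → ℂ satisfy ⟪φ, ψ⟫ = 0 for every symmetric vector φ. Then ψ is not a product state with all factors nonzero: there do not exist nonzero f₁, …, f_n : Fin d → ℂ with ψ j = ∏_i f_i (j i) for all j. In particular, any nonzero state orthogonal to the symmetric sector is entangled. -/
import Mathlib

/-- The linear functional `g ↦ ∑ x, g x * v x`. -/
noncomputable def dotFun (d : ℕ) (v : Fin d → ℂ) : (Fin d → ℂ) →ₗ[ℂ] ℂ where
  toFun g := ∑ x, g x * v x
  map_add' g h := by simp [add_mul, Finset.sum_add_distrib]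
  map_smul' c g := by simp [Finset.mul_sum, mul_assoc]

/-- **States orthogonal to the symmetric sector are entangled.**
If `ψ : (Fin n → Fin d) → ℂ` satisfies `⟪φ, ψ⟫ = 0` for every symmetric vector `φ`
(i.e. every `φ` with `φ (j ∘ σ) = φ j` for all permutations `σ` and all `j`), then
`ψ` is not a product state with all factors nonzero. -/
theorem orthogonal_to_symmetric_not_product (n d : ℕ) (hn : 1 ≤ n) (hd : 1 ≤ d)
    (ψ : (Fin n → Fin d) → ℂ)
    (h : ∀ φ : (Fin n → Fin d) → ℂ,
      (∀ σ : Equiv.Perm (Fin n), ∀ j : Fin n → Fin d, φ (j ∘ σ) = φ j) →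
      (∑ j, (starRingEnd ℂ) (φ j) * ψ j) = 0) :
    ¬ ∃ f : Fin n → Fin d → ℂ, (∀ i, f i ≠ 0) ∧ ∀ j, ψ j = ∏ i, f i (j i) := by
  rintro ⟨f, hf, hprod⟩
  -- kernels of the functionals `g ↦ ∑ x, g x * f i x` are proper subspaces
  have hker : ∀ i, LinearMap.ker (dotFun d (f i)) ≠ ⊤ := by
    intro i htop
    obtain ⟨x₀, hx₀⟩ := Function.ne_iff.mp (hf i)
    have : dotFun d (f i) (Pi.single x₀ 1) = 0 := by
      rw [← LinearMap.mem_ker, htop]; trivial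
    simp only [dotFun, LinearMap.coe_mk, AddHom.coe_mk, Pi.single_apply,
      ite_mul, one_mul, zero_mul, Finset.sum_ite_eq', Finset.mem_univ, if_true] at this
    exact hx₀ this
  -- pick g outside the union of kernels
  have hcov : (⋃ i, ((LinearMap.ker (dotFun d (f i)) : Submodule ℂ (Fin d → ℂ)) :
      Set (Fin d → ℂ))) ≠ Set.univ := by
    intro hc
    obtain ⟨i, hi⟩ := Subspace.exists_eq_top_of_iUnion_eq_univ hc
    exact hker i hi
  obtain ⟨g, hg⟩ := Set.ne_univ_iff_exists_notMem _ |>.mp hcov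
  simp only [Set.mem_iUnion, not_exists, SetLike.mem_coe, LinearMap.mem_ker] at hg
  have hg' : ∀ i, ∑ x, g x * f i x ≠ 0 := fun i => hg i
  -- the symmetric product state
  set φ : (Fin n → Fin d) → ℂ := fun j => ∏ i, (starRingEnd ℂ) (g (j i)) with hφ
  have hsym : ∀ σ : Equiv.Perm (Fin n), ∀ j : Fin n → Fin d, φ (j ∘ σ) = φ j := by
    intro σ j
    simp only [hφ, Function.comp]
    exact Equiv.prod_comp σ fun i => (starRingEnd ℂ) (g (j i))
  have h0 := h φ hsym
  have : ∑ j : Fin n → Fin d, (starRingEnd ℂ) (φ j) * ψ j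
      = ∏ i, ∑ x, g x * f i x := by
    rw [Finset.prod_univ_sum]
    rw [← Fintype.piFinset_univ]
    apply Finset.sum_congr rfl
    intro j _
    rw [hprod j]
    simp only [hφ, map_prod, RingHomCompTriple.comp_apply, Complex.conj_conj]
    rw [← Finset.prod_mul_distrib]
    simp [Complex.conj_conj]
  rw [h0] at this
  obtain ⟨i, _, hi⟩ := Finset.prod_eq_zero_iff.mp this.symm
  exact hg' i hi
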